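/- arXiv:2101.05396 — 7 statements merged into one kernel-verified Lean document; each statement's English description precedes it below -/
import Mathlib

section
/- Let T : [0, t_f] → ℝ be continuous and positive, and suppose Σ : [0, t_f] → ℝ is continuous, positive, and satisfies the integral constraint ∫₀^{t_f} T(t)/Σ(t) dt = m·t_f/k_B (with constants m, k_B, γ > 0). Then the power functional P(Σ) = (γ/t_f)·∫₀^{t_f} (k_B·T(t)/m − Σ(t)) dt satisfies P(Σ) ≤ (γ·k_B/m)·Var(√T), where Var(√T) = (1/t_f)∫₀^{t_f} T dt − ((1/t_f)∫₀^{t_f} √T dt)². -/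
open MeasureTheory intervalIntegral

/-- Upper bound on the power functional under the periodicity (integral) constraint:
`P(Σ) ≤ (γ k_B/m)·Var(√T)`. -/
theorem stmt_1 (t_f m k_B γ : ℝ) (ht_f : 0 < t_f) (hm : 0 < m) (hk : 0 < k_B) (hγ : 0 < γ)
    (T S : ℝ → ℝ)
    (hTcont : ContinuousOn T (Set.Icc 0 t_f))
    (hTpos : ∀ t ∈ Set.Icc 0 t_f, 0 < T t)
    (hScont : ContinuousOn S (Set.Icc 0 t_f))
    (hSpos : ∀ t ∈ Set.Icc 0 t_f, 0 < S t)
    (hconstr : ∫ t in (0:ℝ)..t_f, T t / S t = m * t_f / k_B) :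
    (γ / t_f) * ∫ t in (0:ℝ)..t_f, (k_B * T t / m - S t) ≤
      (γ * k_B / m) *
        ((1 / t_f) * (∫ t in (0:ℝ)..t_f, T t)
          - ((1 / t_f) * ∫ t in (0:ℝ)..t_f, Real.sqrt (T t)) ^ 2) := by
  have h0 : (0:ℝ) ≤ t_f := ht_f.le
  have huIcc : Set.uIcc (0:ℝ) t_f = Set.Icc 0 t_f := Set.uIcc_of_le h0
  have cT : ContinuousOn T (Set.uIcc (0:ℝ) t_f) := by rw [huIcc]; exact hTcont
  have cS : ContinuousOn S (Set.uIcc (0:ℝ) t_f) := by rw [huIcc]; exact hScont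
  have cTS : ContinuousOn (fun t => T t / S t) (Set.uIcc (0:ℝ) t_f) :=
    cT.div cS (fun t ht => (hSpos t (huIcc ▸ ht)).ne')
  have csq : ContinuousOn (fun t => Real.sqrt (T t)) (Set.uIcc (0:ℝ) t_f) :=
    Real.continuous_sqrt.comp_continuousOn cT
  have iT : IntervalIntegrable T volume 0 t_f := cT.intervalIntegrable
  have iS : IntervalIntegrable S volume 0 t_f := cS.intervalIntegrable
  have iTS : IntervalIntegrable (fun t => T t / S t) volume 0 t_f := cTS.intervalIntegrable
  have isq : IntervalIntegrable (fun t => Real.sqrt (T t)) volume 0 t_f := csq.intervalIntegrable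
  set A := ∫ t in (0:ℝ)..t_f, T t / S t with hA
  set B := ∫ t in (0:ℝ)..t_f, Real.sqrt (T t) with hB
  set C := ∫ t in (0:ℝ)..t_f, S t with hC
  have hCpos : 0 < C := intervalIntegral.intervalIntegral_pos_of_pos_on iS
    (fun t ht => hSpos t ⟨ht.1.le, ht.2.le⟩) ht_f
  set l := B / C with hl
  -- Cauchy–Schwarz via the quadratic trick
  have key : 0 ≤ A - 2 * l * B + l ^ 2 * C := by
    have hint : ∫ t in (0:ℝ)..t_f, (T t / S t - 2 * l * Real.sqrt (T t) + l ^ 2 * S t)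
        = A - 2 * l * B + l ^ 2 * C := by
      rw [intervalIntegral.integral_add ((iTS.sub (isq.const_mul (2*l)))) (iS.const_mul (l^2)),
        intervalIntegral.integral_sub iTS (isq.const_mul (2*l)),
        intervalIntegral.integral_const_mul, intervalIntegral.integral_const_mul]
    rw [← hint]
    apply intervalIntegral.integral_nonneg h0
    intro u hu
    have hTu := hTpos u hu
    have hSu := hSpos u hu
    set a := Real.sqrt (T u) with ha
    set b := Real.sqrt (S u) with hb
    have h2 : a ^ 2 = T u := Real.sq_sqrt hTu.le
    have h3 : b ^ 2 = S u := Real.sq_sqrt hSu.le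
    have h4 : (0:ℝ) < b := Real.sqrt_pos.mpr hSu
    have h5 := sq_nonneg (a / b - l * b)
    have e1 : (a / b) ^ 2 = T u / S u := by rw [div_pow, h2, h3]
    have e2 : a / b * b = a := div_mul_cancel₀ _ h4.ne'
    have e3 : (a / b - l * b) ^ 2 = (a / b) ^ 2 - 2 * l * (a / b * b) + l ^ 2 * b ^ 2 := by
      ring
    rw [e1, e2, h3] at e3
    linarith [e3 ▸ h5]
  have hCS : B ^ 2 ≤ A * C := by
    have e : A - 2 * l * B + l ^ 2 * C = (A * C - B ^ 2) / C := by
      rw [hl]; field_simp; ring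
    have h' : 0 ≤ (A * C - B ^ 2) / C := e ▸ key
    have h'' := mul_nonneg h' hCpos.le
    rw [div_mul_cancel₀ _ hCpos.ne'] at h''
    linarith
  have hAeq : A * k_B = m * t_f := by rw [hconstr]; field_simp
  have hLHS : (∫ t in (0:ℝ)..t_f, (k_B * T t / m - S t))
      = (k_B / m) * (∫ t in (0:ℝ)..t_f, T t) - C := by
    have hfun : (fun t => k_B * T t / m - S t) = fun t => (k_B / m) * T t - S t := by
      funext t; ring
    rw [hfun, intervalIntegral.integral_sub (iT.const_mul (k_B / m)) iS,
      intervalIntegral.integral_const_mul]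
  rw [hLHS]
  have hB2 : B ^ 2 * k_B ≤ m * t_f * C := by
    have e2' : A * C * k_B = m * t_f * C := by rw [← hAeq]; ring
    nlinarith [mul_le_mul_of_nonneg_right hCS hk.le]
  set IT := ∫ t in (0:ℝ)..t_f, T t
  have hgm : (0:ℝ) < γ / (m * k_B * t_f ^ 2) := by positivity
  have expand : (γ * k_B / m) * ((1 / t_f) * IT - ((1 / t_f) * B) ^ 2)
      - (γ / t_f) * ((k_B / m) * IT - C)
      = (γ / (m * t_f ^ 2)) * (m * t_f * C - B ^ 2 * k_B) := by
    field_simp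
    ring
  linarith [mul_nonneg (by positivity : (0:ℝ) ≤ γ / (m * t_f ^ 2)) (by linarith : (0:ℝ) ≤ m * t_f * C - B ^ 2 * k_B), expand]
end

section
/- Let T : [0, t_f] → ℝ be continuous and positive. Define Σ*(t) = ((k_B/(m·t_f))·∫₀^{t_f} √T(s) ds)·√T(t). Then Σ* satisfies the constraint ∫₀^{t_f} T(t)/Σ*(t) dt = m·t_f/k_B, and the power functional P(Σ*) = (γ/t_f)·∫₀^{t_f}(k_B·T/m − Σ*) dt equals exactly (γ·k_B/m)·Var(√T). Moreover Σ* is the unique continuous positive maximizer of P subject to the constraint. -/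
open MeasureTheory intervalIntegral

/-- The optimal variance trajectory `Σ*(t) = ((k_B/(m t_f))∫√T)·√T(t)` satisfies the
integral constraint, achieves power exactly `(γ k_B/m)·Var(√T)`, and is the unique
continuous positive maximizer of the power functional subject to the constraint. -/
theorem stmt_2 (t_f m k_B γ : ℝ) (ht_f : 0 < t_f) (hm : 0 < m) (hk : 0 < k_B) (hγ : 0 < γ)
    (T : ℝ → ℝ)
    (hTcont : ContinuousOn T (Set.Icc 0 t_f))
    (hTpos : ∀ t ∈ Set.Icc 0 t_f, 0 < T t) :
    let Sstar : ℝ → ℝ := fun t =>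
      ((k_B / (m * t_f)) * ∫ s in (0:ℝ)..t_f, Real.sqrt (T s)) * Real.sqrt (T t)
    let Var : ℝ := (1 / t_f) * (∫ t in (0:ℝ)..t_f, T t)
          - ((1 / t_f) * ∫ t in (0:ℝ)..t_f, Real.sqrt (T t)) ^ 2
    (∫ t in (0:ℝ)..t_f, T t / Sstar t) = m * t_f / k_B ∧
    (γ / t_f) * (∫ t in (0:ℝ)..t_f, (k_B * T t / m - Sstar t)) = (γ * k_B / m) * Var ∧
    (∀ S : ℝ → ℝ, ContinuousOn S (Set.Icc 0 t_f) → (∀ t ∈ Set.Icc 0 t_f, 0 < S t) →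
      (∫ t in (0:ℝ)..t_f, T t / S t) = m * t_f / k_B →
      (γ / t_f) * (∫ t in (0:ℝ)..t_f, (k_B * T t / m - S t)) = (γ * k_B / m) * Var →
      ∀ t ∈ Set.Icc 0 t_f, S t = Sstar t) := by
  intro Sstar Var
  have huIcc : Set.uIcc (0:ℝ) t_f = Set.Icc 0 t_f := Set.uIcc_of_le ht_f.le
  set I := ∫ s in (0:ℝ)..t_f, Real.sqrt (T s) with hIdef
  set J := ∫ t in (0:ℝ)..t_f, T t with hJdef
  have hsqcont : ContinuousOn (fun t => Real.sqrt (T t)) (Set.Icc 0 t_f) :=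
    Real.continuous_sqrt.comp_continuousOn hTcont
  have hsqint : IntervalIntegrable (fun t => Real.sqrt (T t)) volume 0 t_f :=
    ContinuousOn.intervalIntegrable (by rwa [huIcc])
  have hTint : IntervalIntegrable T volume 0 t_f :=
    ContinuousOn.intervalIntegrable (by rwa [huIcc])
  have h0mem : (0:ℝ) ∈ Set.Icc (0:ℝ) t_f := ⟨le_refl 0, ht_f.le⟩
  have hIpos : 0 < I :=
    intervalIntegral.integral_pos ht_f hsqcont (fun x _ => Real.sqrt_nonneg _)
      ⟨0, h0mem, Real.sqrt_pos.mpr (hTpos 0 h0mem)⟩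
  set c : ℝ := k_B / (m * t_f) * I with hcdef
  have hcpos : 0 < c := by
    apply mul_pos (div_pos hk (mul_pos hm ht_f)) hIpos
  have hSstar : ∀ t, Sstar t = c * Real.sqrt (T t) := fun t => rfl
  have hmt : m * t_f ≠ 0 := (mul_pos hm ht_f).ne'
  -- Part 1
  have part1 : (∫ t in (0:ℝ)..t_f, T t / Sstar t) = m * t_f / k_B := by
    have hEq : Set.EqOn (fun t => T t / Sstar t) (fun t => (1/c) * Real.sqrt (T t))
        (Set.uIcc 0 t_f) := by
      intro t ht
      rw [huIcc] at ht
      simp only [hSstar]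
      rw [div_mul_eq_div_div_swap, Real.div_sqrt]
      ring
    rw [intervalIntegral.integral_congr hEq, intervalIntegral.integral_const_mul, ← hIdef]
    field_simp [hcdef]
    rw [hcdef]; field_simp
  -- linearity of the power integral, for a general continuous integrand S
  have lin : ∀ S : ℝ → ℝ, ContinuousOn S (Set.Icc 0 t_f) →
      (∫ t in (0:ℝ)..t_f, (k_B * T t / m - S t)) = (k_B / m) * J - (∫ t in (0:ℝ)..t_f, S t) := by
    intro S hScont
    have hSint : IntervalIntegrable S volume 0 t_f :=
      ContinuousOn.intervalIntegrable (by rwa [huIcc])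
    have h1 : IntervalIntegrable (fun t => k_B * T t / m) volume 0 t_f := by
      have : IntervalIntegrable (fun t => (k_B/m) * T t) volume 0 t_f :=
        hTint.const_mul _
      refine this.congr ?_
      intro t _; dsimp only; ring
    rw [intervalIntegral.integral_sub h1 hSint]
    congr 1
    have : (∫ t in (0:ℝ)..t_f, k_B * T t / m) = ∫ t in (0:ℝ)..t_f, (k_B/m) * T t := by
      apply intervalIntegral.integral_congr
      intro t _; dsimp only; ring
    rw [this, intervalIntegral.integral_const_mul, ← hJdef]
  -- Part 2
  have hSstarInt : (∫ t in (0:ℝ)..t_f, Sstar t) = c * I := by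
    have : (∫ t in (0:ℝ)..t_f, Sstar t) = ∫ t in (0:ℝ)..t_f, c * Real.sqrt (T t) := rfl
    rw [this, intervalIntegral.integral_const_mul, ← hIdef]
  have part2 : (γ / t_f) * (∫ t in (0:ℝ)..t_f, (k_B * T t / m - Sstar t))
      = (γ * k_B / m) * Var := by
    rw [lin Sstar (continuousOn_const.mul hsqcont), hSstarInt]
    simp only [Var, hcdef, ← hIdef, ← hJdef]
    field_simp
  refine ⟨part1, part2, ?_⟩
  -- Part 3: uniqueness
  intro S hScont hSpos hconstr hpow t ht
  have hSnz : ∀ x ∈ Set.Icc (0:ℝ) t_f, S x ≠ 0 := fun x hx => (hSpos x hx).ne'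
  have hBval : (∫ x in (0:ℝ)..t_f, S x) = c * I := by
    rw [lin S hScont] at hpow
    rw [lin Sstar (continuousOn_const.mul hsqcont), hSstarInt] at part2
    have hγt : γ / t_f ≠ 0 := (div_pos hγ ht_f).ne'
    have := sub_eq_zero.mpr (hpow.trans part2.symm)
    rw [← mul_sub] at this
    rcases mul_eq_zero.mp this with h | h
    · exact absurd h hγt
    · linarith [sub_eq_zero.mp h]
  -- Cauchy–Schwarz equality argument
  set A : ℝ := m * t_f / k_B with hAdef
  set B : ℝ := c * I with hBdef
  have hApos : 0 < A := div_pos (mul_pos hm ht_f) hk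
  have hBpos : 0 < B := mul_pos hcpos hIpos
  have hAB : A * B = I ^ 2 := by
    simp only [hAdef, hBdef, hcdef]
    field_simp
  have hsqAB : Real.sqrt A * Real.sqrt B = I := by
    rw [← Real.sqrt_mul hApos.le, hAB, Real.sqrt_sq hIpos.le]
  set h : ℝ → ℝ := fun x => Real.sqrt B * Real.sqrt (T x / S x) - Real.sqrt A * Real.sqrt (S x)
    with hhdef
  have hhcont : ContinuousOn h (Set.Icc 0 t_f) := by
    apply ContinuousOn.sub
    · exact continuousOn_const.mul
        (Real.continuous_sqrt.comp_continuousOn (hTcont.div hScont hSnz))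
    · exact continuousOn_const.mul (Real.continuous_sqrt.comp_continuousOn hScont)
  -- pointwise expansion of h² on Icc
  have hsq_expand : ∀ x ∈ Set.Icc (0:ℝ) t_f,
      h x ^ 2 = B * (T x / S x) - 2 * I * Real.sqrt (T x) + A * S x := by
    intro x hx
    have hTx := hTpos x hx
    have hSx := hSpos x hx
    have hTSnn : 0 ≤ T x / S x := le_of_lt (div_pos hTx hSx)
    have hcross : Real.sqrt (T x / S x) * Real.sqrt (S x) = Real.sqrt (T x) := by
      rw [← Real.sqrt_mul hTSnn, div_mul_cancel₀ _ hSx.ne']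
    have e1 : Real.sqrt (T x / S x) ^ 2 = T x / S x := Real.sq_sqrt hTSnn
    have e2 : Real.sqrt (S x) ^ 2 = S x := Real.sq_sqrt hSx.le
    have e3 : Real.sqrt B ^ 2 = B := Real.sq_sqrt hBpos.le
    have e4 : Real.sqrt A ^ 2 = A := Real.sq_sqrt hApos.le
    simp only [hhdef]
    have expand : (Real.sqrt B * Real.sqrt (T x / S x) - Real.sqrt A * Real.sqrt (S x)) ^ 2
        = Real.sqrt B ^ 2 * Real.sqrt (T x / S x) ^ 2
          - 2 * (Real.sqrt A * Real.sqrt B) * (Real.sqrt (T x / S x) * Real.sqrt (S x))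
          + Real.sqrt A ^ 2 * Real.sqrt (S x) ^ 2 := by ring
    rw [expand, e1, e2, e3, e4, hcross, hsqAB]
  -- integral of h² is zero
  have hTSint : IntervalIntegrable (fun x => T x / S x) volume 0 t_f :=
    ContinuousOn.intervalIntegrable (by rw [huIcc]; exact hTcont.div hScont hSnz)
  have hSint : IntervalIntegrable S volume 0 t_f :=
    ContinuousOn.intervalIntegrable (by rwa [huIcc])
  have hint_h2 : (∫ x in (0:ℝ)..t_f, h x ^ 2) = 0 := by
    have congreq : Set.EqOn (fun x => h x ^ 2)
        (fun x => B * (T x / S x) - 2 * I * Real.sqrt (T x) + A * S x) (Set.uIcc 0 t_f) := by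
      intro x hx; rw [huIcc] at hx; exact hsq_expand x hx
    rw [intervalIntegral.integral_congr congreq]
    have i1 : IntervalIntegrable (fun x => B * (T x / S x)) volume 0 t_f := hTSint.const_mul _
    have i2 : IntervalIntegrable (fun x => 2 * I * Real.sqrt (T x)) volume 0 t_f :=
      hsqint.const_mul _
    have i3 : IntervalIntegrable (fun x => A * S x) volume 0 t_f := hSint.const_mul _
    rw [intervalIntegral.integral_add (i1.sub i2) i3, intervalIntegral.integral_sub i1 i2,
      intervalIntegral.integral_const_mul, intervalIntegral.integral_const_mul,
      intervalIntegral.integral_const_mul, hconstr, hBval, ← hIdef]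
    nlinarith [hAB]
  -- h vanishes on Icc
  have hzero : ∀ x ∈ Set.Icc (0:ℝ) t_f, h x = 0 := by
    intro x hx
    by_contra hne
    have hpos : 0 < ∫ y in (0:ℝ)..t_f, h y ^ 2 :=
      intervalIntegral.integral_pos ht_f (hhcont.pow 2)
        (fun y _ => sq_nonneg _) ⟨x, hx, pow_two_pos_of_ne_zero hne⟩
    rw [hint_h2] at hpos
    exact lt_irrefl 0 hpos
  -- conclude
  have hht := hzero t ht
  have hTt := hTpos t ht
  have hSt := hSpos t ht
  have hTSnn : 0 ≤ T t / S t := le_of_lt (div_pos hTt hSt)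
  have heq : Real.sqrt B * Real.sqrt (T t / S t) = Real.sqrt A * Real.sqrt (S t) := by
    have := hht
    simp only [hhdef] at this
    linarith
  have hsq2 : B * (T t / S t) = A * S t := by
    have := congrArg (fun z => z ^ 2) heq
    simp only [mul_pow] at this
    rw [Real.sq_sqrt hBpos.le, Real.sq_sqrt hApos.le, Real.sq_sqrt hTSnn,
      Real.sq_sqrt hSt.le] at this
    exact this
  have hSsq : A * S t ^ 2 = B * T t := by
    have hsq3 : B * (T t / S t) * S t = A * S t * S t := by rw [hsq2]
    rw [mul_assoc, div_mul_cancel₀ _ hSt.ne'] at hsq3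
    rw [hsq3]; ring
  have hSsSq : A * Sstar t ^ 2 = B * T t := by
    rw [hSstar, mul_pow, Real.sq_sqrt hTt.le]
    simp only [hAdef, hBdef, hcdef]
    field_simp
  have hsqeq : S t ^ 2 = Sstar t ^ 2 := by
    have : A * S t ^ 2 = A * Sstar t ^ 2 := by rw [hSsq, hSsSq]
    exact mul_left_cancel₀ hApos.ne' this
  have hSsnn : 0 ≤ Sstar t := by
    rw [hSstar]; exact mul_nonneg hcpos.le (Real.sqrt_nonneg _)
  have hfact : (S t - Sstar t) * (S t + Sstar t) = 0 := by linear_combination hsqeq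
  rcases mul_eq_zero.mp hfact with h1 | h1
  · linarith
  · linarith
end

section
/- For the Carnot temperature profile with 0 < T_c < T_h and the optimal variance trajectory Σ*(t) = ((k_B/(m t_f))∫₀^{t_f}√T)·√T(t), the heat uptake during the hot phase equals Q_h = ∫₀^{t_f/2} γ·(k_B·T(t)/m − Σ*(t)) dt = (γ·k_B·t_f/(4m))·√T_h·(√T_h − √T_c), and the classical efficiency η = P*·t_f / Q_h equals the Curzon–Ahlborn value 1 − √(T_c/T_h). -/
open MeasureTheory intervalIntegral

/-- For the Carnot profile with the optimal variance trajectory, the hot-phase heat uptake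
equals `(γ k_B t_f/(4m))·√T_h·(√T_h − √T_c)`, and the classical efficiency `P* t_f / Q_h`
equals the Curzon–Ahlborn value `1 − √(T_c/T_h)`. -/
theorem stmt_6 (t_f m k_B γ : ℝ) (ht_f : 0 < t_f) (hm : 0 < m) (hk : 0 < k_B) (hγ : 0 < γ)
    (T_c T_h : ℝ) (hc : 0 < T_c) (hch : T_c < T_h) :
    let T : ℝ → ℝ := fun t => if t < t_f / 2 then T_h else T_c
    let Sstar : ℝ → ℝ := fun t =>
      ((k_B / (m * t_f)) * ∫ s in (0:ℝ)..t_f, Real.sqrt (T s)) * Real.sqrt (T t)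
    let Q_h : ℝ := ∫ t in (0:ℝ)..(t_f / 2), γ * (k_B * T t / m - Sstar t)
    let Pstar : ℝ := (γ * k_B / (4 * m)) * (Real.sqrt T_h - Real.sqrt T_c) ^ 2
    Q_h = (γ * k_B * t_f / (4 * m)) * Real.sqrt T_h * (Real.sqrt T_h - Real.sqrt T_c) ∧
    Pstar * t_f / Q_h = 1 - Real.sqrt (T_c / T_h) := by
  intro T Sstar Q_h Pstar
  have hc2 : 0 < t_f / 2 := by linarith
  have hTh : (0:ℝ) ≤ T_h := by linarith
  have hsc : Real.sqrt T_c < Real.sqrt T_h := Real.sqrt_lt_sqrt hc.le hch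
  have hscle : Real.sqrt T_c ≤ Real.sqrt T_h := hsc.le
  have hshpos : 0 < Real.sqrt T_h := Real.sqrt_pos.mpr (lt_trans hc hch)
  have hsq : Real.sqrt T_h * Real.sqrt T_h = T_h := Real.mul_self_sqrt hTh
  -- antitonicity of √(T ·), for integrability
  have hanti : Antitone (fun s => Real.sqrt (T s)) := by
    intro x y hxy
    simp only [T]
    by_cases hy : y < t_f / 2
    · have hx : x < t_f / 2 := lt_of_le_of_lt hxy hy
      simp [hx, hy]
    · by_cases hx : x < t_f / 2 <;> simp [hx, hy, hscle]
  have hint : ∀ a b : ℝ, IntervalIntegrable (fun s => Real.sqrt (T s)) volume a b :=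
    fun a b => hanti.intervalIntegrable
  -- a.e. x ≠ t_f/2
  have hae : ∀ᵐ x : ℝ ∂volume, x ≠ t_f / 2 := by
    rw [MeasureTheory.ae_iff]
    simp only [not_not]
    simpa using Real.volume_singleton (x := t_f / 2)
  have I1 : ∫ s in (0:ℝ)..(t_f / 2), Real.sqrt (T s) = (t_f / 2) * Real.sqrt T_h := by
    rw [intervalIntegral.integral_congr_ae (g := fun _ => Real.sqrt T_h) ?_]
    · simp
    · filter_upwards [hae] with x hx hxI
      have hmem : x ∈ Set.Ioc 0 (t_f / 2) := by
        rwa [Set.uIoc_of_le hc2.le] at hxI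
      have hlt : x < t_f / 2 := lt_of_le_of_ne hmem.2 hx
      simp [T, hlt]
  have I2 : ∫ s in (t_f / 2)..t_f, Real.sqrt (T s) = (t_f / 2) * Real.sqrt T_c := by
    rw [intervalIntegral.integral_congr (g := fun _ => Real.sqrt T_c) ?_]
    · rw [intervalIntegral.integral_const, smul_eq_mul]; ring
    · intro x hx
      have hmem : x ∈ Set.Icc (t_f / 2) t_f := by
        rwa [Set.uIcc_of_le (by linarith)] at hx
      have : ¬ x < t_f / 2 := not_lt.mpr hmem.1
      simp [T, this]
  have Stot : ∫ s in (0:ℝ)..t_f, Real.sqrt (T s)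
      = (t_f / 2) * (Real.sqrt T_h + Real.sqrt T_c) := by
    rw [← intervalIntegral.integral_add_adjacent_intervals (hint 0 (t_f / 2)) (hint (t_f / 2) t_f),
      I1, I2]
    ring
  have hQ : Q_h = (γ * k_B * t_f / (4 * m)) * Real.sqrt T_h
      * (Real.sqrt T_h - Real.sqrt T_c) := by
    show (∫ t in (0:ℝ)..(t_f / 2), γ * (k_B * T t / m - Sstar t)) = _
    rw [intervalIntegral.integral_congr_ae
        (g := fun _ => γ * (k_B * T_h / m -
          ((k_B / (m * t_f)) * ((t_f / 2) * (Real.sqrt T_h + Real.sqrt T_c)))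
            * Real.sqrt T_h)) ?_]
    · rw [intervalIntegral.integral_const]
      rw [smul_eq_mul, sub_zero]
      field_simp
      linear_combination (-8) * hsq
    · filter_upwards [hae] with x hx hxI
      have hmem : x ∈ Set.Ioc 0 (t_f / 2) := by
        rwa [Set.uIoc_of_le hc2.le] at hxI
      have hlt : x < t_f / 2 := lt_of_le_of_ne hmem.2 hx
      simp only [Sstar, Stot, T, if_pos hlt]
  refine ⟨hQ, ?_⟩
  have hQne : (γ * k_B * t_f / (4 * m)) * Real.sqrt T_h * (Real.sqrt T_h - Real.sqrt T_c) ≠ 0 := by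
    have hd : 0 < Real.sqrt T_h - Real.sqrt T_c := sub_pos.mpr hsc
    have hA : 0 < γ * k_B * t_f / (4 * m) := by positivity
    exact (mul_pos (mul_pos hA hshpos) hd).ne'
  show Pstar * t_f / Q_h = 1 - Real.sqrt (T_c / T_h)
  rw [hQ, Real.sqrt_div hc.le]
  show ((γ * k_B / (4 * m)) * (Real.sqrt T_h - Real.sqrt T_c) ^ 2) * t_f / _ = _
  have hd : Real.sqrt T_h - Real.sqrt T_c ≠ 0 := (sub_pos.mpr hsc).ne'
  field_simp [hγ.ne', hk.ne', ht_f.ne', hm.ne', hshpos.ne', hd]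
end

section
/- Under the hypotheses of the low-friction ODE Σ'(t) = Σ(t)·(q'(t)/(2q(t)) − γ/m) + (γ k_B/m²)·T(t) with Σ and q positive and periodic (Σ(0)=Σ(t_f), q(0)=q(t_f)), the integral constraint ∫₀^{t_f} T(t)/Σ(t) dt = m·t_f/k_B holds. -/
open MeasureTheory intervalIntegral

/-- Periodicity of the protocol and state forces the integral constraint
`∫₀^{t_f} T/Σ = m t_f / k_B`. -/
theorem stmt_8 (t_f m k_B γ : ℝ) (ht_f : 0 < t_f) (hm : 0 < m) (hk : 0 < k_B) (hγ : 0 < γ)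
    (T S q q' S' : ℝ → ℝ)
    (hTcont : ContinuousOn T (Set.Icc 0 t_f))
    (hTpos : ∀ t ∈ Set.Icc 0 t_f, 0 < T t)
    (hSpos : ∀ t ∈ Set.Icc 0 t_f, 0 < S t)
    (hqpos : ∀ t ∈ Set.Icc 0 t_f, 0 < q t)
    (hq : ∀ t ∈ Set.Icc 0 t_f, HasDerivAt q (q' t) t)
    (hq'cont : ContinuousOn q' (Set.Icc 0 t_f))
    (hS'cont : ContinuousOn S' (Set.Icc 0 t_f))
    (hS : ∀ t ∈ Set.Icc 0 t_f, HasDerivAt S (S' t) t)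
    (hODE : ∀ t ∈ Set.Icc 0 t_f,
      S' t = S t * (q' t / (2 * q t) - γ / m) + (γ * k_B / m ^ 2) * T t)
    (hSper : S 0 = S t_f) (hqper : q 0 = q t_f) :
    ∫ t in (0:ℝ)..t_f, T t / S t = m * t_f / k_B := by
  have h0f : (0:ℝ) ≤ t_f := ht_f.le
  have huIcc : Set.uIcc (0:ℝ) t_f = Set.Icc 0 t_f := Set.uIcc_of_le h0f
  set c : ℝ := m ^ 2 / (γ * k_B) with hc
  set F : ℝ → ℝ := fun t => c * (Real.log (S t) - Real.log (q t) / 2 + (γ / m) * t) with hF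
  have hmem0 : (0:ℝ) ∈ Set.Icc (0:ℝ) t_f := ⟨le_refl _, h0f⟩
  have hmemf : t_f ∈ Set.Icc (0:ℝ) t_f := ⟨h0f, le_refl _⟩
  have hderiv : ∀ t ∈ Set.uIcc (0:ℝ) t_f, HasDerivAt F (T t / S t) t := by
    intro t ht
    rw [huIcc] at ht
    have hS0 := (hSpos t ht).ne'
    have hq0 := (hqpos t ht).ne'
    have h1 : HasDerivAt (fun s => Real.log (S s)) (S' t / S t) t := (hS t ht).log hS0
    have h2 : HasDerivAt (fun s => Real.log (q s)) (q' t / q t) t := (hq t ht).log hq0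
    have h3 : HasDerivAt (fun s : ℝ => (γ / m) * s) (γ / m) t := by
      simpa using (hasDerivAt_id t).const_mul (γ / m)
    have h4 := (((h1.sub (h2.div_const 2)).add h3).const_mul c)
    have heq : T t / S t = c * (S' t / S t - q' t / q t / 2 + γ / m) := by
      rw [hODE t ht, hc]
      field_simp
      ring
    rw [heq]
    exact h4
  have hScont : ContinuousOn S (Set.Icc 0 t_f) := fun t ht =>
    (hS t ht).continuousAt.continuousWithinAt
  have hint : IntervalIntegrable (fun t => T t / S t) volume 0 t_f := by
    apply ContinuousOn.intervalIntegrable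
    rw [huIcc]
    exact hTcont.div hScont (fun t ht => (hSpos t ht).ne')
  have := intervalIntegral.integral_eq_sub_of_hasDerivAt hderiv hint
  rw [this, hF]
  simp only
  rw [hSper, hqper, hc]
  have hγ0 := hγ.ne'
  have hk0 := hk.ne'
  have hm0 := hm.ne'
  field_simp
  ring
end

section
/- Let T : [0, t_f] → ℝ be continuous and positive, λ > 0, μ ≥ 0, and set Σ*(t) = √((T(t)² + μ T(t))/λ). Then for every continuous positive Σ : [0,t_f] → ℝ satisfying both ∫₀^{t_f} Σ(t) dt = ∫₀^{t_f} Σ*(t) dt and ∫₀^{t_f} T(t)/Σ(t) dt = ∫₀^{t_f} T(t)/Σ*(t) dt, one has ∫₀^{t_f} T(t)²/Σ(t) dt ≥ ∫₀^{t_f} T(t)²/Σ*(t) dt. -/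
open MeasureTheory intervalIntegral

/-- Global optimality of the Lagrangian stationary point: among all continuous positive
variance trajectories with the same two integral constraints, `Σ*` minimizes `∫ T²/Σ`. -/
theorem stmt_11 (t_f : ℝ) (ht_f : 0 < t_f) (T : ℝ → ℝ)
    (hTcont : ContinuousOn T (Set.Icc 0 t_f))
    (hTpos : ∀ t ∈ Set.Icc 0 t_f, 0 < T t)
    (lam mu : ℝ) (hlam : 0 < lam) (hmu : 0 ≤ mu) :
    let Sstar : ℝ → ℝ := fun t => Real.sqrt ((T t ^ 2 + mu * T t) / lam)
    ∀ S : ℝ → ℝ, ContinuousOn S (Set.Icc 0 t_f) → (∀ t ∈ Set.Icc 0 t_f, 0 < S t) →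
      (∫ t in (0:ℝ)..t_f, S t) = (∫ t in (0:ℝ)..t_f, Sstar t) →
      (∫ t in (0:ℝ)..t_f, T t / S t) = (∫ t in (0:ℝ)..t_f, T t / Sstar t) →
      (∫ t in (0:ℝ)..t_f, T t ^ 2 / Sstar t) ≤ (∫ t in (0:ℝ)..t_f, T t ^ 2 / S t) := by
  intro Sstar S hScont hSpos hc1 hc2
  have ht : (0:ℝ) ≤ t_f := ht_f.le
  have huIcc : Set.uIcc (0:ℝ) t_f = Set.Icc 0 t_f := Set.uIcc_of_le ht
  have hapos : ∀ t ∈ Set.Icc 0 t_f, 0 < T t ^ 2 + mu * T t := by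
    intro t ht'
    have h1 := hTpos t ht'
    nlinarith [mul_nonneg hmu h1.le]
  have hSstarpos : ∀ t ∈ Set.Icc 0 t_f, 0 < Sstar t := fun t ht' =>
    Real.sqrt_pos.2 (div_pos (hapos t ht') hlam)
  have hSstarcont : ContinuousOn Sstar (Set.Icc 0 t_f) := by
    apply ContinuousOn.sqrt
    exact ((hTcont.pow 2).add (continuousOn_const.mul hTcont)).div_const _
  -- integrability of all pieces
  have hSne : ∀ t ∈ Set.Icc 0 t_f, S t ≠ 0 := fun t ht' => (hSpos t ht').ne'
  have hSstarne : ∀ t ∈ Set.Icc 0 t_f, Sstar t ≠ 0 := fun t ht' => (hSstarpos t ht').ne'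
  have hi1 : IntervalIntegrable (fun t => T t ^ 2 / S t) volume 0 t_f :=
    (((hTcont.pow 2).div hScont hSne)).intervalIntegrable_of_Icc ht
  have hi2 : IntervalIntegrable (fun t => T t / S t) volume 0 t_f :=
    ((hTcont.div hScont hSne)).intervalIntegrable_of_Icc ht
  have hi3 : IntervalIntegrable S volume 0 t_f := hScont.intervalIntegrable_of_Icc ht
  have hj1 : IntervalIntegrable (fun t => T t ^ 2 / Sstar t) volume 0 t_f :=
    (((hTcont.pow 2).div hSstarcont hSstarne)).intervalIntegrable_of_Icc ht
  have hj2 : IntervalIntegrable (fun t => T t / Sstar t) volume 0 t_f :=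
    ((hTcont.div hSstarcont hSstarne)).intervalIntegrable_of_Icc ht
  have hj3 : IntervalIntegrable Sstar volume 0 t_f := hSstarcont.intervalIntegrable_of_Icc ht
  -- pointwise inequality for combined functions
  have hpt : ∀ t ∈ Set.Icc 0 t_f,
      T t ^ 2 / Sstar t + mu * (T t / Sstar t) + lam * Sstar t
        ≤ T t ^ 2 / S t + mu * (T t / S t) + lam * S t := by
    intro t ht'
    set a := T t ^ 2 + mu * T t with ha
    set x := S t
    set s := Sstar t with hs
    have hx : 0 < x := hSpos t ht'
    have hspos : 0 < s := hSstarpos t ht'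
    have hane : 0 < a := hapos t ht'
    have hs2 : s ^ 2 = a / lam := by
      rw [hs]
      exact Real.sq_sqrt (le_of_lt (div_pos hane hlam))
    have haeq : a = lam * s ^ 2 := by
      rw [hs2]
      field_simp
    have hcomb : ∀ y : ℝ, y ≠ 0 →
        T t ^ 2 / y + mu * (T t / y) = a / y := by
      intro y hy
      field_simp [ha]
      linear_combination -ha
    rw [hcomb x hx.ne', hcomb s hspos.ne']
    have key : a / s + lam * s ≤ a / x + lam * x := by
      rw [haeq]
      rw [div_add' _ _ _ hspos.ne', div_add' _ _ _ hx.ne',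
        div_le_div_iff₀ hspos hx]
      nlinarith [sq_nonneg (s - x), hspos, hx]
    linarith
  have hineq :
      (∫ t in (0:ℝ)..t_f, (T t ^ 2 / Sstar t + mu * (T t / Sstar t) + lam * Sstar t))
        ≤ ∫ t in (0:ℝ)..t_f, (T t ^ 2 / S t + mu * (T t / S t) + lam * S t) := by
    apply intervalIntegral.integral_mono_on ht
    · exact (hj1.add (hj2.const_mul mu)).add (hj3.const_mul lam)
    · exact (hi1.add (hi2.const_mul mu)).add (hi3.const_mul lam)
    · exact hpt
  have hsplit1 :
      (∫ t in (0:ℝ)..t_f, (T t ^ 2 / Sstar t + mu * (T t / Sstar t) + lam * Sstar t))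
        = (∫ t in (0:ℝ)..t_f, T t ^ 2 / Sstar t)
          + mu * (∫ t in (0:ℝ)..t_f, T t / Sstar t)
          + lam * (∫ t in (0:ℝ)..t_f, Sstar t) := by
    rw [intervalIntegral.integral_add (hj1.add (hj2.const_mul mu)) (hj3.const_mul lam),
      intervalIntegral.integral_add hj1 (hj2.const_mul mu),
      intervalIntegral.integral_const_mul, intervalIntegral.integral_const_mul]
  have hsplit2 :
      (∫ t in (0:ℝ)..t_f, (T t ^ 2 / S t + mu * (T t / S t) + lam * S t))
        = (∫ t in (0:ℝ)..t_f, T t ^ 2 / S t)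
          + mu * (∫ t in (0:ℝ)..t_f, T t / S t)
          + lam * (∫ t in (0:ℝ)..t_f, S t) := by
    rw [intervalIntegral.integral_add (hi1.add (hi2.const_mul mu)) (hi3.const_mul lam),
      intervalIntegral.integral_add hi1 (hi2.const_mul mu),
      intervalIntegral.integral_const_mul, intervalIntegral.integral_const_mul]
  rw [hsplit1, hsplit2, hc1, hc2] at hineq
  linarith
end

section
/- Let T : [0, t_f] → ℝ be continuous and positive. Define F(μ) = (∫₀^{t_f} √(T² + μT) dt)·(∫₀^{t_f} √(T/(T+μ)) dt) for μ ≥ 0. Then F(0) = t_f·∫₀^{t_f} T dt, and as μ → ∞, F(μ) → (∫₀^{t_f} √T dt)². Consequently, the equation F(μ) = t_f ∫₀^{t_f} T dt − (t_f² m/(γ k_B))·P has solution μ = 0 when P = 0, and P → P* = (γ k_B/m)·Var(√T) as μ → ∞. -/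
open MeasureTheory intervalIntegral Filter

/-- Behavior of the multiplier function `F(μ)`: `F(0) = t_f·∫T`, `F(μ) → (∫√T)²` as
`μ → ∞`, and the corresponding power `P(μ) = (γ k_B/(t_f² m))(t_f∫T − F(μ))` tends to
`P* = (γ k_B/m)·Var(√T)`. -/
theorem stmt_13 (t_f m k_B γ : ℝ) (ht_f : 0 < t_f) (hm : 0 < m) (hk : 0 < k_B) (hγ : 0 < γ)
    (T : ℝ → ℝ)
    (hTcont : ContinuousOn T (Set.Icc 0 t_f))
    (hTpos : ∀ t ∈ Set.Icc 0 t_f, 0 < T t) :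
    let F : ℝ → ℝ := fun mu =>
      (∫ t in (0:ℝ)..t_f, Real.sqrt (T t ^ 2 + mu * T t)) *
        (∫ t in (0:ℝ)..t_f, Real.sqrt (T t / (T t + mu)))
    F 0 = t_f * (∫ t in (0:ℝ)..t_f, T t) ∧
    Tendsto F atTop (nhds ((∫ t in (0:ℝ)..t_f, Real.sqrt (T t)) ^ 2)) ∧
    Tendsto (fun mu => (γ * k_B / (t_f ^ 2 * m)) * (t_f * (∫ t in (0:ℝ)..t_f, T t) - F mu))
      atTop
      (nhds ((γ * k_B / m) *
        ((1 / t_f) * (∫ t in (0:ℝ)..t_f, T t)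
          - ((1 / t_f) * ∫ t in (0:ℝ)..t_f, Real.sqrt (T t)) ^ 2))) := by
  intro F
  have htf := ht_f.le
  have huIcc : Set.uIcc (0:ℝ) t_f = Set.Icc 0 t_f := Set.uIcc_of_le htf
  set S : ℝ := ∫ t in (0:ℝ)..t_f, Real.sqrt (T t) with hS
  set I : ℝ := ∫ t in (0:ℝ)..t_f, T t with hI
  -- max of T
  obtain ⟨x₀, hx₀, hB'⟩ := isCompact_Icc.exists_isMaxOn ⟨0, Set.left_mem_Icc.2 htf⟩ hTcont
  have hB : ∀ t ∈ Set.Icc (0:ℝ) t_f, T t ≤ T x₀ := fun t ht => hB' ht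
  set B : ℝ := T x₀ with hBdef
  have hBpos : 0 < B := hTpos x₀ hx₀
  -- integrability facts
  have hIT : IntervalIntegrable T volume 0 t_f := by
    apply ContinuousOn.intervalIntegrable; rwa [huIcc]
  have hIsqrtT : IntervalIntegrable (fun t => Real.sqrt (T t)) volume 0 t_f := by
    apply ContinuousOn.intervalIntegrable; rw [huIcc]; exact hTcont.sqrt
  have hIg : ∀ μ : ℝ, IntervalIntegrable (fun t => Real.sqrt (T t ^ 2 + μ * T t)) volume 0 t_f := by
    intro μ
    apply ContinuousOn.intervalIntegrable; rw [huIcc]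
    exact ((hTcont.pow 2).add (continuousOn_const.mul hTcont)).sqrt
  have hIh : ∀ μ : ℝ, 0 ≤ μ →
      IntervalIntegrable (fun t => Real.sqrt (T t / (T t + μ))) volume 0 t_f := by
    intro μ hμ
    apply ContinuousOn.intervalIntegrable; rw [huIcc]
    exact (hTcont.div (hTcont.add continuousOn_const)
      (fun t ht => (add_pos_of_pos_of_nonneg (hTpos t ht) hμ).ne')).sqrt
  -- Part 1
  have h1 : F 0 = t_f * I := by
    have hg0 : (∫ t in (0:ℝ)..t_f, Real.sqrt (T t ^ 2 + 0 * T t)) = I := by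
      rw [hI]
      apply intervalIntegral.integral_congr
      intro t ht
      rw [huIcc] at ht
      simp [Real.sqrt_sq (hTpos t ht).le]
    have hh0 : (∫ t in (0:ℝ)..t_f, Real.sqrt (T t / (T t + 0))) = t_f := by
      have : (∫ t in (0:ℝ)..t_f, Real.sqrt (T t / (T t + 0)))
          = ∫ t in (0:ℝ)..t_f, (1:ℝ) := by
        apply intervalIntegral.integral_congr
        intro t ht
        rw [huIcc] at ht
        simp only [add_zero, div_self (hTpos t ht).ne', Real.sqrt_one]
      rw [this]; simp
    show (∫ t in (0:ℝ)..t_f, Real.sqrt (T t ^ 2 + 0 * T t)) *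
        (∫ t in (0:ℝ)..t_f, Real.sqrt (T t / (T t + 0))) = t_f * I
    rw [hg0, hh0, mul_comm]
  -- nonnegativity of S
  have hSnn : 0 ≤ S := by
    rw [hS]
    apply intervalIntegral.integral_nonneg htf
    intro t _; exact Real.sqrt_nonneg _
  -- bounds on the integrals for μ ≥ 1
  have hglow : ∀ μ : ℝ, 0 ≤ μ →
      S * Real.sqrt μ ≤ ∫ t in (0:ℝ)..t_f, Real.sqrt (T t ^ 2 + μ * T t) := by
    intro μ hμ
    have := intervalIntegral.integral_mono_on htf
      (hIsqrtT.mul_const (Real.sqrt μ)) (hIg μ) (fun t ht => ?_)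
    · rwa [intervalIntegral.integral_mul_const] at this
    · have hT := (hTpos t ht).le
      rw [show T t ^ 2 + μ * T t = T t * (T t + μ) by ring,
        Real.sqrt_mul hT]
      gcongr
      linarith
  have hgup : ∀ μ : ℝ, 0 ≤ μ →
      (∫ t in (0:ℝ)..t_f, Real.sqrt (T t ^ 2 + μ * T t)) ≤ S * Real.sqrt (B + μ) := by
    intro μ hμ
    have := intervalIntegral.integral_mono_on htf
      (hIg μ) (hIsqrtT.mul_const (Real.sqrt (B + μ))) (fun t ht => ?_)
    · rwa [intervalIntegral.integral_mul_const] at this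
    · have hT := (hTpos t ht).le
      rw [show T t ^ 2 + μ * T t = T t * (T t + μ) by ring,
        Real.sqrt_mul hT]
      gcongr
      exact hB t ht
  have hhlow : ∀ μ : ℝ, 0 ≤ μ →
      S / Real.sqrt (B + μ) ≤ ∫ t in (0:ℝ)..t_f, Real.sqrt (T t / (T t + μ)) := by
    intro μ hμ
    have := intervalIntegral.integral_mono_on htf
      (hIsqrtT.div_const (Real.sqrt (B + μ))) (hIh μ hμ) (fun t ht => ?_)
    · rwa [intervalIntegral.integral_div] at this
    · have hT := (hTpos t ht).le
      rw [Real.sqrt_div hT]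
      exact div_le_div_of_nonneg_left (Real.sqrt_nonneg _)
        (Real.sqrt_pos.2 (add_pos_of_pos_of_nonneg (hTpos t ht) hμ))
        (Real.sqrt_le_sqrt (by linarith [hB t ht]))
  have hhup : ∀ μ : ℝ, 0 < μ →
      (∫ t in (0:ℝ)..t_f, Real.sqrt (T t / (T t + μ))) ≤ S / Real.sqrt μ := by
    intro μ hμ
    have := intervalIntegral.integral_mono_on htf
      (hIh μ hμ.le) (hIsqrtT.div_const (Real.sqrt μ)) (fun t ht => ?_)
    · rwa [intervalIntegral.integral_div] at this
    · have hT := (hTpos t ht).le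
      rw [Real.sqrt_div hT]
      exact div_le_div_of_nonneg_left (Real.sqrt_nonneg _)
        (Real.sqrt_pos.2 hμ)
        (Real.sqrt_le_sqrt (by linarith [hTpos t ht]))
  -- ratio limits
  have hrat1 : Tendsto (fun μ : ℝ => Real.sqrt μ / Real.sqrt (B + μ)) atTop (nhds 1) := by
    have hfrac : Tendsto (fun μ : ℝ => μ / (B + μ)) atTop (nhds 1) := by
      have h0 : Tendsto (fun μ : ℝ => B / (B + μ)) atTop (nhds 0) :=
        tendsto_const_nhds.div_atTop (tendsto_atTop_add_const_left _ B tendsto_id)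
      have := (tendsto_const_nhds (x := (1:ℝ))).sub h0
      rw [sub_zero] at this
      refine this.congr' ?_
      filter_upwards [eventually_gt_atTop 0] with μ hμ
      field_simp
      ring
    have := (Real.continuous_sqrt.tendsto 1).comp hfrac
    rw [Real.sqrt_one] at this
    refine this.congr' ?_
    filter_upwards [eventually_gt_atTop 0] with μ hμ
    simp [Function.comp, Real.sqrt_div hμ.le]
  have hrat2 : Tendsto (fun μ : ℝ => Real.sqrt (B + μ) / Real.sqrt μ) atTop (nhds 1) := by
    have hfrac : Tendsto (fun μ : ℝ => (B + μ) / μ) atTop (nhds 1) := by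
      have h0 : Tendsto (fun μ : ℝ => B / μ) atTop (nhds 0) :=
        tendsto_const_nhds.div_atTop tendsto_id
      have := h0.add (tendsto_const_nhds (x := (1:ℝ)))
      rw [zero_add] at this
      refine this.congr' ?_
      filter_upwards [eventually_gt_atTop 0] with μ hμ
      field_simp
    have := (Real.continuous_sqrt.tendsto 1).comp hfrac
    rw [Real.sqrt_one] at this
    refine this.congr' ?_
    filter_upwards [eventually_gt_atTop 0] with μ hμ
    have : (0:ℝ) ≤ B + μ := by linarith [hBpos.le]
    simp [Function.comp, Real.sqrt_div this]
  -- Part 2 via squeeze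
  have h2 : Tendsto F atTop (nhds (S ^ 2)) := by
    have hlowT : Tendsto (fun μ : ℝ => S ^ 2 * (Real.sqrt μ / Real.sqrt (B + μ)))
        atTop (nhds (S ^ 2)) := by
      have := hrat1.const_mul (S ^ 2)
      rwa [mul_one] at this
    have hupT : Tendsto (fun μ : ℝ => S ^ 2 * (Real.sqrt (B + μ) / Real.sqrt μ))
        atTop (nhds (S ^ 2)) := by
      have := hrat2.const_mul (S ^ 2)
      rwa [mul_one] at this
    refine tendsto_of_tendsto_of_tendsto_of_le_of_le' hlowT hupT ?_ ?_
    · filter_upwards [eventually_gt_atTop 0] with μ hμ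
      have hsb : (0:ℝ) < Real.sqrt (B + μ) :=
        Real.sqrt_pos.2 (by linarith [hBpos])
      have h1' := hglow μ hμ.le
      have h2' := hhlow μ hμ.le
      have hlnn : 0 ≤ S / Real.sqrt (B + μ) := div_nonneg hSnn hsb.le
      have hgn : 0 ≤ S * Real.sqrt μ := mul_nonneg hSnn (Real.sqrt_nonneg _)
      calc S ^ 2 * (Real.sqrt μ / Real.sqrt (B + μ))
          = (S * Real.sqrt μ) * (S / Real.sqrt (B + μ)) := by ring
        _ ≤ _ := mul_le_mul h1' h2' hlnn (le_trans hgn h1')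
    · filter_upwards [eventually_gt_atTop 0] with μ hμ
      have hsμ : (0:ℝ) < Real.sqrt μ := Real.sqrt_pos.2 hμ
      have hsb : (0:ℝ) < Real.sqrt (B + μ) :=
        Real.sqrt_pos.2 (by linarith [hBpos])
      have h1' := hgup μ hμ.le
      have h2' := hhup μ hμ
      have hhnn : 0 ≤ ∫ t in (0:ℝ)..t_f, Real.sqrt (T t / (T t + μ)) :=
        le_trans (div_nonneg hSnn hsb.le) (hhlow μ hμ.le)
      have hupnn : 0 ≤ S * Real.sqrt (B + μ) := mul_nonneg hSnn hsb.le
      calc F μ ≤ (S * Real.sqrt (B + μ)) * (S / Real.sqrt μ) :=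
            mul_le_mul h1' h2' hhnn hupnn
        _ = S ^ 2 * (Real.sqrt (B + μ) / Real.sqrt μ) := by ring
  -- Part 3
  refine ⟨h1, h2, ?_⟩
  have h3 := ((tendsto_const_nhds (x := t_f * I)).sub h2).const_mul (γ * k_B / (t_f ^ 2 * m))
  convert h3 using 2
  rw [hS, hI]
  field_simp
end

section
/- Let s : [0, t_f] → ℝ be measurable and nonnegative, with m₁ = mean(s), V = Var(s) > 0, μ₃ the third central moment of s. If μ₃ < 0, then the efficiency at maximum power η* = 1/(2 + μ₃/(V·m₁)) satisfies 1/2 < η* ≤ 1; if μ₃ > 0 then 0 < η* < 1/2; and if μ₃ = 0 then η* = 1/2. -/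
open MeasureTheory intervalIntegral

/-- Classification of the efficiency at maximum power `η* = 1/(2 + μ₃/(V m₁))` according
to the sign of the third central moment `μ₃`. -/
theorem stmt_17 (t_f : ℝ) (ht_f : 0 < t_f) (s : ℝ → ℝ)
    (hmeas : Measurable s) (hs : ∀ t ∈ Set.Icc 0 t_f, 0 ≤ s t)
    (hint1 : IntervalIntegrable s volume 0 t_f)
    (hint2 : IntervalIntegrable (fun t => s t ^ 2) volume 0 t_f)
    (hint3 : IntervalIntegrable (fun t => s t ^ 3) volume 0 t_f) :
    let m₁ : ℝ := (1 / t_f) * ∫ t in (0:ℝ)..t_f, s t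
    let V : ℝ := (1 / t_f) * ∫ t in (0:ℝ)..t_f, (s t - m₁) ^ 2
    let μ₃ : ℝ := (1 / t_f) * ∫ t in (0:ℝ)..t_f, (s t - m₁) ^ 3
    let η : ℝ := 1 / (2 + μ₃ / (V * m₁))
    0 < V →
    ((μ₃ < 0 → 1 / 2 < η ∧ η ≤ 1) ∧
     (0 < μ₃ → 0 < η ∧ η < 1 / 2) ∧
     (μ₃ = 0 → η = 1 / 2)) := by
  intro m₁ V μ₃ η hV
  have hm₁def : m₁ = (1 / t_f) * ∫ t in (0:ℝ)..t_f, s t := rfl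
  have hVdef : V = (1 / t_f) * ∫ t in (0:ℝ)..t_f, (s t - m₁) ^ 2 := rfl
  have hμdef : μ₃ = (1 / t_f) * ∫ t in (0:ℝ)..t_f, (s t - m₁) ^ 3 := rfl
  have hηdef : η = 1 / (2 + μ₃ / (V * m₁)) := rfl
  have ht0 : (0:ℝ) ≤ t_f := ht_f.le
  have hI1 : 0 ≤ ∫ t in (0:ℝ)..t_f, s t :=
    intervalIntegral.integral_nonneg ht0 (fun u hu => hs u hu)
  have hm0 : 0 ≤ m₁ := by
    rw [hm₁def]; positivity
  -- integrability of powers of (s - m₁)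
  have h2 : IntervalIntegrable (fun t => (s t - m₁) ^ 2) volume 0 t_f := by
    have he : (fun t => (s t - m₁) ^ 2)
        = fun t => s t ^ 2 + ((-2 * m₁) * s t + m₁ ^ 2) := by
      funext t; ring
    rw [he]
    exact hint2.add ((hint1.const_mul _).add intervalIntegrable_const)
  have h3 : IntervalIntegrable (fun t => (s t - m₁) ^ 3) volume 0 t_f := by
    have he : (fun t => (s t - m₁) ^ 3)
        = fun t => s t ^ 3 + ((-3 * m₁) * s t ^ 2 + ((3 * m₁ ^ 2) * s t + (-m₁ ^ 3))) := by
      funext t; ring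
    rw [he]
    exact hint3.add ((hint2.const_mul _).add ((hint1.const_mul _).add intervalIntegrable_const))
  -- m₁ > 0
  have hm1 : 0 < m₁ := by
    rcases hm0.lt_or_eq with h | h
    · exact h
    · exfalso
      have hIeq : ∫ t in (0:ℝ)..t_f, s t = 0 := by
        have h' := h.symm
        rw [hm₁def] at h'
        have : (1 / t_f) ≠ 0 := by positivity
        exact (mul_eq_zero.1 h').resolve_left this
      have hIoc : MeasurableSet (Set.Ioc (0:ℝ) t_f) := measurableSet_Ioc
      have hint : IntegrableOn s (Set.Ioc 0 t_f) volume := hint1.1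
      have hnn : 0 ≤ᵐ[volume.restrict (Set.Ioc 0 t_f)] s :=
        (ae_restrict_iff' hIoc).2 (ae_of_all _ fun t ht => hs t (Set.Ioc_subset_Icc_self ht))
      have hset : ∫ t in Set.Ioc (0:ℝ) t_f, s t = 0 := by
        rw [← intervalIntegral.integral_of_le ht0]; exact hIeq
      have hzero : s =ᵐ[volume.restrict (Set.Ioc 0 t_f)] 0 :=
        (MeasureTheory.integral_eq_zero_iff_of_nonneg_ae hnn hint).1 hset
      have hVzero : V = 0 := by
        rw [hVdef]
        have : ∫ t in (0:ℝ)..t_f, (s t - m₁) ^ 2 = 0 := by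
          rw [intervalIntegral.integral_of_le ht0]
          have : (fun t => (s t - m₁) ^ 2) =ᵐ[volume.restrict (Set.Ioc 0 t_f)] 0 := by
            filter_upwards [hzero] with t ht
            simp [ht, ← h]
          rw [MeasureTheory.integral_congr_ae this]
          simp
        rw [this, mul_zero]
      rw [hVzero] at hV; exact lt_irrefl 0 hV
  -- key inequality: μ₃ + m₁ * V ≥ 0
  have hJ : 0 ≤ ∫ t in (0:ℝ)..t_f, s t * (s t - m₁) ^ 2 :=
    intervalIntegral.integral_nonneg ht0 (fun u hu => mul_nonneg (hs u hu) (sq_nonneg _))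
  have hJeq : ∫ t in (0:ℝ)..t_f, s t * (s t - m₁) ^ 2
      = (∫ t in (0:ℝ)..t_f, (s t - m₁) ^ 3) + m₁ * ∫ t in (0:ℝ)..t_f, (s t - m₁) ^ 2 := by
    have he : (fun t => s t * (s t - m₁) ^ 2)
        = fun t => (s t - m₁) ^ 3 + m₁ * (s t - m₁) ^ 2 := by
      funext t; ring
    rw [he, intervalIntegral.integral_add h3 (h2.const_mul m₁),
      intervalIntegral.integral_const_mul]
  have hkey : -(V * m₁) ≤ μ₃ := by
    have h1 : 0 ≤ μ₃ + m₁ * V := by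
      rw [hμdef, hVdef]
      have := mul_nonneg (le_of_lt (show (0:ℝ) < 1 / t_f by positivity)) hJ
      rw [hJeq] at this
      nlinarith [this]
    linarith
  have hVm : 0 < V * m₁ := mul_pos hV hm1
  have hx : -1 ≤ μ₃ / (V * m₁) := by
    rw [le_div_iff₀ hVm]; linarith
  refine ⟨?_, ?_, ?_⟩
  · intro hμ
    have hxneg : μ₃ / (V * m₁) < 0 := div_neg_of_neg_of_pos hμ hVm
    have hD1 : (1:ℝ) ≤ 2 + μ₃ / (V * m₁) := by linarith
    have hD0 : (0:ℝ) < 2 + μ₃ / (V * m₁) := by linarith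
    constructor
    · rw [hηdef]
      exact one_div_lt_one_div_of_lt hD0 (by linarith)
    · rw [hηdef, div_le_one hD0]; linarith
  · intro hμ
    have hxpos : 0 < μ₃ / (V * m₁) := div_pos hμ hVm
    have hD0 : (0:ℝ) < 2 + μ₃ / (V * m₁) := by linarith
    constructor
    · rw [hηdef]; positivity
    · rw [hηdef]
      have : (1:ℝ) / (2 + μ₃ / (V * m₁)) < 1 / 2 :=
        one_div_lt_one_div_of_lt (by norm_num) (by linarith)
      exact this
  · intro hμ
    rw [hηdef, hμ]
    norm_num
end
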